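/- Let G be a finite group of order p_1^{d_1}···p_e^{d_e} acting on a commutative ring k, and for each i let P_i be a Sylow p_i-subgroup. If for each i there exists x_i ∈ k with tr_{P_i}(x_i) = 1, then there exists x ∈ k with tr_G(x) = 1. -/

import Mathlib

open scoped Classical in
/-- The trace map of the subgroup `H` acting on `k`. -/
noncomputable def tr {G : Type*} [Group G] [Fintype G] {k : Type*} [CommRing k]
    [MulSemiringAction G k] (H : Subgroup G) (x : k) : k :=
  ∑ σ : G, if σ ∈ H then σ • x else 0

open scoped Classical

lemma tr_eq_sum_subtype {G : Type*} [Group G] [Fintype G] {k : Type*} [CommRing k]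
    [MulSemiringAction G k] (H : Subgroup G) (x : k) :
    tr H x = ∑ h : H, (h : G) • x := by
  rw [tr, ← Finset.sum_filter]
  exact Finset.sum_subtype (p := (· ∈ H)) _ (by simp) _

lemma tr_top_eq {G : Type*} [Group G] [Fintype G] {k : Type*} [CommRing k]
    [MulSemiringAction G k] (x : k) :
    tr (⊤ : Subgroup G) x = ∑ σ : G, σ • x := by
  simp [tr]

lemma tr_top_add {G : Type*} [Group G] [Fintype G] {k : Type*} [CommRing k]
    [MulSemiringAction G k] (x y : k) :
    tr (⊤ : Subgroup G) (x + y) = tr (⊤ : Subgroup G) x + tr (⊤ : Subgroup G) y := by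
  rw [tr_top_eq, tr_top_eq, tr_top_eq, ← Finset.sum_add_distrib]
  simp [smul_add]

lemma tr_top_neg {G : Type*} [Group G] [Fintype G] {k : Type*} [CommRing k]
    [MulSemiringAction G k] (x : k) :
    tr (⊤ : Subgroup G) (-x) = -tr (⊤ : Subgroup G) x := by
  rw [tr_top_eq, tr_top_eq, ← Finset.sum_neg_distrib]
  simp [smul_neg]

lemma tr_top_of_tr_eq_one {G : Type*} [Group G] [Fintype G] {k : Type*} [CommRing k]
    [MulSemiringAction G k] (P : Subgroup G) {x : k} (hx : tr P x = 1) :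
    tr (⊤ : Subgroup G) x = (P.index : k) := by
  rw [tr_top_eq, ← Fintype.sum_fiberwise (QuotientGroup.mk (s := P)) (fun σ => σ • x)]
  have key : ∀ q : G ⧸ P, ∑ σ : {σ : G // (QuotientGroup.mk σ : G ⧸ P) = q}, (σ : G) • x = 1 := by
    intro q
    let e : P ≃ {σ : G // (QuotientGroup.mk σ : G ⧸ P) = q} :=
      { toFun := fun h => ⟨q.out * h, by
          rw [QuotientGroup.mk_mul_of_mem _ h.2, QuotientGroup.out_eq']⟩
        invFun := fun σ => ⟨q.out⁻¹ * σ, by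
          have : (QuotientGroup.mk q.out : G ⧸ P) = QuotientGroup.mk σ.1 := by
            rw [QuotientGroup.out_eq', σ.2]
          exact QuotientGroup.eq.mp this⟩
        left_inv := fun h => by ext; simp
        right_inv := fun σ => by ext; simp }
    rw [← Equiv.sum_comp e (fun σ => (σ : G) • x)]
    have he : ∀ h : P, ((e h : G)) • x = q.out • ((h : G) • x) := fun h =>
      mul_smul q.out (h : G) x
    rw [Finset.sum_congr rfl (fun h _ => he h), ← Finset.smul_sum,
      ← tr_eq_sum_subtype, hx, smul_one]
  rw [Finset.sum_congr rfl (fun q _ => key q), Finset.sum_const, Finset.card_univ,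
    nsmul_eq_mul, mul_one, Subgroup.index, Nat.card_eq_fintype_card]

/-- If for every prime `p` dividing `|G|` some Sylow `p`-subgroup admits an element of
trace `1`, then `G` admits an element of trace `1`. -/
theorem trace_one_of_sylows {G k : Type*} [Group G] [Fintype G] [CommRing k]
    [MulSemiringAction G k]
    (h : ∀ p : ℕ, p.Prime → p ∣ Fintype.card G →
      ∃ P : Sylow p G, ∃ x : k, tr (P : Subgroup G) x = 1) :
    ∃ x : k, tr (⊤ : Subgroup G) x = 1 := by
  classical
  set n := Fintype.card G with hn
  have hn0 : n ≠ 0 := Fintype.card_ne_zero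
  -- The subgroup of integers m such that (m : k) is a trace
  let I : AddSubgroup ℤ :=
    { carrier := {m : ℤ | ∃ x : k, tr (⊤ : Subgroup G) x = (m : k)}
      zero_mem' := ⟨0, by simp [tr_top_eq]⟩
      add_mem' := by
        rintro a b ⟨x, hx⟩ ⟨y, hy⟩
        exact ⟨x + y, by rw [tr_top_add, hx, hy, Int.cast_add]⟩
      neg_mem' := by
        rintro a ⟨x, hx⟩
        exact ⟨-x, by rw [tr_top_neg, hx, Int.cast_neg]⟩ }
  have hnI : (n : ℤ) ∈ I := by
    refine ⟨1, ?_⟩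
    simp [tr_top_eq, smul_eq_mul, hn]
  have hpI : ∀ p ∈ n.primeFactors, ((n / p ^ n.factorization p : ℕ) : ℤ) ∈ I := by
    intro p hp
    have hpp : p.Prime := Nat.prime_of_mem_primeFactors hp
    have : Fact p.Prime := ⟨hpp⟩
    obtain ⟨P, x, hx⟩ := h p hpp (Nat.dvd_of_mem_primeFactors hp)
    refine ⟨x, ?_⟩
    have hcard : Nat.card P = p ^ n.factorization p := by
      rw [Sylow.card_eq_multiplicity, Nat.card_eq_fintype_card, ← hn]
    have hmul := Subgroup.index_mul_card (P : Subgroup G)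
    rw [hcard, Nat.card_eq_fintype_card, ← hn] at hmul
    have hpow : 0 < p ^ n.factorization p := pow_pos hpp.pos _
    rw [tr_top_of_tr_eq_one _ hx, Nat.div_eq_of_eq_mul_left hpow hmul.symm]
    push_cast
    ring
  obtain ⟨g, hg⟩ := Int.subgroup_cyclic I
  have hmem : ∀ m : ℤ, m ∈ I ↔ g ∣ m := by
    intro m
    rw [hg, AddSubgroup.mem_closure_singleton]
    constructor
    · rintro ⟨c, rfl⟩; exact Dvd.intro_left c (by rw [smul_eq_mul])
    · rintro ⟨c, rfl⟩; exact ⟨c, by rw [smul_eq_mul, mul_comm]⟩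
  have hone : (1 : ℤ) ∈ I := by
    rw [hmem]
    have hgn : g.natAbs ∣ n := by
      rw [← Int.natAbs_natCast n]; exact Int.natAbs_dvd_natAbs.mpr ((hmem _).mp hnI)
    have h1 : g.natAbs = 1 := by
      by_contra hne
      rcases Nat.eq_zero_or_pos g.natAbs with h0 | hpos
      · exact hn0 (Nat.eq_zero_of_zero_dvd (h0 ▸ hgn))
      obtain ⟨q, hq, hqg⟩ := Nat.exists_prime_and_dvd hne
      have hqn : q ∣ n := hqg.trans hgn
      have hcon : q ∣ n / q ^ n.factorization q := by
        refine hqg.trans ?_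
        rw [← Int.natAbs_natCast (n / q ^ n.factorization q)]
        exact Int.natAbs_dvd_natAbs.mpr
          ((hmem _).mp (hpI q (Nat.mem_primeFactors.mpr ⟨hq, hqn, hn0⟩)))
      exact Nat.not_dvd_ordCompl hq hn0 hcon
    rcases Int.natAbs_eq_iff.mp h1 with h | h <;> simp [h]
  obtain ⟨x, hx⟩ := hone
  exact ⟨x, by simpa using hx⟩
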